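/- Let (G,σ) be a signed simple graph with a unique Sachs subgraph. If G has a perfect matching, then the spectrum of (G,σ) splits about the origin: exactly half of the eigenvalues of its adjacency matrix are positive and half are negative. -/

import Mathlib

open scoped Classical

/-- Degree of a vertex in a simple graph (as a cardinality, avoiding decidability). -/
noncomputable def ndeg {V : Type*} (H : SimpleGraph V) (v : V) : ℕ :=
  Nat.card {w // H.Adj v w}

/-- `H` is a Sachs subgraph of the simple graph `G`: a spanning subgraph all of whose
components are `K₂`'s or cycles. -/
def IsSachsSubgraph {V : Type*} (G H : SimpleGraph V) : Prop :=
  H ≤ G ∧ (∀ v, ndeg H v = 1 ∨ ndeg H v = 2) ∧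
    ∀ u v, H.Adj u v → ¬(ndeg H u = 1 ∧ ndeg H v = 2)

/-- `M` is a perfect matching of `G`, as a spanning subgraph of `K₂` components. -/
def IsPerfectMatchingSub {V : Type*} (G M : SimpleGraph V) : Prop :=
  M ≤ G ∧ ∀ v, ndeg M v = 1

section Spectral
variable {N : ℕ}


variable {N : ℕ}

noncomputable def Qf (B : Matrix (Fin N) (Fin N) ℝ) (x : EuclideanSpace ℝ (Fin N)) : ℝ :=
  inner ℝ x (Matrix.toEuclideanLin B x)

def PosOn (B : Matrix (Fin N) (Fin N) ℝ) (W : Submodule ℝ (EuclideanSpace ℝ (Fin N))) : Prop :=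
  ∀ x ∈ W, x ≠ 0 → 0 < Qf B x

lemma Qf_expand {B : Matrix (Fin N) (Fin N) ℝ} (hB : B.IsHermitian) (x : EuclideanSpace ℝ (Fin N)) :
    Qf B x = ∑ i, hB.eigenvalues i * (hB.eigenvectorBasis.repr x i)^2 := by
  set u := hB.eigenvectorBasis
  have hx : x = ∑ i, u.repr x i • u i := (u.sum_repr x).symm
  have hLu : ∀ j, Matrix.toEuclideanLin B (u j) = hB.eigenvalues j • u j := by
    intro j
    have := hB.mulVec_eigenvectorBasis j
    ext i
    simp [Matrix.toEuclideanLin_apply]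
    exact congrFun this i
  conv_lhs => rw [Qf, hx]
  rw [map_sum]
  simp_rw [map_smul, hLu]
  rw [inner_sum]
  congr 1; ext i
  rw [smul_smul, real_inner_smul_right, ← hx]
  have : (inner ℝ x (u i) : ℝ) = u.repr x i := by
    rw [real_inner_comm]; exact (u.repr_apply_apply x i).symm
  rw [this]; ring

lemma posOn_finrank_le {B : Matrix (Fin N) (Fin N) ℝ} (hB : B.IsHermitian)
    {W : Submodule ℝ (EuclideanSpace ℝ (Fin N))} (hW : PosOn B W) :
    Module.finrank ℝ W ≤ Nat.card {i // 0 < hB.eigenvalues i} := by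
  set u := hB.eigenvectorBasis
  set P := {i // 0 < hB.eigenvalues i}
  let L : EuclideanSpace ℝ (Fin N) →ₗ[ℝ] (P → ℝ) :=
    { toFun := fun x => fun i => u.repr x i.1
      map_add' := by intro x y; ext i; simp
      map_smul' := by intro c x; ext i; simp }
  have hinj : Function.Injective (L.domRestrict W) := by
    rw [injective_iff_map_eq_zero]
    intro ⟨x, hxW⟩ hx0
    have hcoord : ∀ i : P, u.repr x i.1 = 0 := fun i => congrFun hx0 i
    have hQ : Qf B x ≤ 0 := by
      rw [Qf_expand hB]
      apply Finset.sum_nonpos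
      intro j _
      by_cases hj : 0 < hB.eigenvalues j
      · rw [hcoord ⟨j, hj⟩]; simp
      · push_neg at hj
        exact mul_nonpos_of_nonpos_of_nonneg hj (sq_nonneg _)
    have : x = 0 := by
      by_contra hne
      exact absurd (hW x hxW hne) (not_lt.2 hQ)
    exact Subtype.ext this
  calc Module.finrank ℝ W ≤ Module.finrank ℝ (P → ℝ) :=
        LinearMap.finrank_le_finrank_of_injective hinj
    _ = Nat.card P := by simp [Module.finrank_pi, Nat.card_eq_fintype_card]

lemma exists_posOn_finrank_eq {B : Matrix (Fin N) (Fin N) ℝ} (hB : B.IsHermitian) :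
    ∃ W : Submodule ℝ (EuclideanSpace ℝ (Fin N)),
      PosOn B W ∧ Module.finrank ℝ W = Nat.card {i // 0 < hB.eigenvalues i} := by
  set u := hB.eigenvectorBasis
  set P := {i // 0 < hB.eigenvalues i}
  refine ⟨Submodule.span ℝ (Set.range fun i : P => u i.1), ?_, ?_⟩
  · intro x hx hne
    rw [Submodule.mem_span_range_iff_exists_fun] at hx
    obtain ⟨c, hc⟩ := hx
    have hrepr : ∀ j, u.repr x j = ∑ i : P, c i * (if j = i.1 then 1 else 0) := by
      intro j
      rw [← hc]
      rw [map_sum]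
      have : ∀ i : P, u.repr (c i • u i.1) = c i • EuclideanSpace.single i.1 (1:ℝ) := by
        intro i; rw [map_smul, OrthonormalBasis.repr_self]
      simp_rw [this]
      rw [WithLp.ofLp_sum, Finset.sum_apply]
      congr 1; ext i
      simp [EuclideanSpace.single_apply]
    have hzero : ∀ j, ¬ 0 < hB.eigenvalues j → u.repr x j = 0 := by
      intro j hj
      rw [hrepr j]
      apply Finset.sum_eq_zero
      intro i _
      have : j ≠ i.1 := fun h => hj (h ▸ i.2)
      simp [this]
    have hne' : ∃ j, u.repr x j ≠ 0 := by
      by_contra h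
      push_neg at h
      apply hne
      have : u.repr x = 0 := by ext j; exact h j
      simpa using congrArg u.repr.symm this
    obtain ⟨j0, hj0⟩ := hne'
    have hj0pos : 0 < hB.eigenvalues j0 := by
      by_contra h; exact hj0 (hzero j0 h)
    rw [Qf_expand hB]
    apply Finset.sum_pos'
    · intro j _
      by_cases hj : 0 < hB.eigenvalues j
      · positivity
      · rw [hzero j hj]; simp
    · exact ⟨j0, Finset.mem_univ _, by positivity⟩
  · have hli : LinearIndependent ℝ (fun i : P => u i.1) :=
      (u.orthonormal.linearIndependent).comp Subtype.val Subtype.val_injective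
    rw [finrank_span_eq_card hli, Nat.card_eq_fintype_card]

def NegOn (B : Matrix (Fin N) (Fin N) ℝ) (W : Submodule ℝ (EuclideanSpace ℝ (Fin N))) : Prop :=
  ∀ x ∈ W, x ≠ 0 → Qf B x < 0

lemma negOn_finrank_le {B : Matrix (Fin N) (Fin N) ℝ} (hB : B.IsHermitian)
    {W : Submodule ℝ (EuclideanSpace ℝ (Fin N))} (hW : NegOn B W) :
    Module.finrank ℝ W ≤ Nat.card {i // hB.eigenvalues i < 0} := by
  set u := hB.eigenvectorBasis
  set P := {i // hB.eigenvalues i < 0}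
  let L : EuclideanSpace ℝ (Fin N) →ₗ[ℝ] (P → ℝ) :=
    { toFun := fun x => fun i => u.repr x i.1
      map_add' := by intro x y; ext i; simp
      map_smul' := by intro c x; ext i; simp }
  have hinj : Function.Injective (L.domRestrict W) := by
    rw [injective_iff_map_eq_zero]
    intro ⟨x, hxW⟩ hx0
    have hcoord : ∀ i : P, u.repr x i.1 = 0 := fun i => congrFun hx0 i
    have hQ : 0 ≤ Qf B x := by
      rw [Qf_expand hB]
      apply Finset.sum_nonneg
      intro j _
      by_cases hj : hB.eigenvalues j < 0
      · rw [hcoord ⟨j, hj⟩]; simp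
      · push_neg at hj
        positivity
    have : x = 0 := by
      by_contra hne
      exact absurd (hW x hxW hne) (not_lt.2 hQ)
    exact Subtype.ext this
  calc Module.finrank ℝ W ≤ Module.finrank ℝ (P → ℝ) :=
        LinearMap.finrank_le_finrank_of_injective hinj
    _ = Nat.card P := by simp [Module.finrank_pi, Nat.card_eq_fintype_card]

lemma exists_negOn_finrank_eq {B : Matrix (Fin N) (Fin N) ℝ} (hB : B.IsHermitian) :
    ∃ W : Submodule ℝ (EuclideanSpace ℝ (Fin N)),
      NegOn B W ∧ Module.finrank ℝ W = Nat.card {i // hB.eigenvalues i < 0} := by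
  set u := hB.eigenvectorBasis
  set P := {i // hB.eigenvalues i < 0}
  refine ⟨Submodule.span ℝ (Set.range fun i : P => u i.1), ?_, ?_⟩
  · intro x hx hne
    rw [Submodule.mem_span_range_iff_exists_fun] at hx
    obtain ⟨c, hc⟩ := hx
    have hrepr : ∀ j, u.repr x j = ∑ i : P, c i * (if j = i.1 then 1 else 0) := by
      intro j
      rw [← hc]
      rw [map_sum]
      have : ∀ i : P, u.repr (c i • u i.1) = c i • EuclideanSpace.single i.1 (1:ℝ) := by
        intro i; rw [map_smul, OrthonormalBasis.repr_self]
      simp_rw [this]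
      rw [WithLp.ofLp_sum, Finset.sum_apply]
      congr 1; ext i
      simp [EuclideanSpace.single_apply]
    have hzero : ∀ j, ¬ hB.eigenvalues j < 0 → u.repr x j = 0 := by
      intro j hj
      rw [hrepr j]
      apply Finset.sum_eq_zero
      intro i _
      have : j ≠ i.1 := fun h => hj (h ▸ i.2)
      simp [this]
    have hne' : ∃ j, u.repr x j ≠ 0 := by
      by_contra h
      push_neg at h
      apply hne
      have : u.repr x = 0 := by ext j; exact h j
      simpa using congrArg u.repr.symm this
    obtain ⟨j0, hj0⟩ := hne'
    have hj0neg : hB.eigenvalues j0 < 0 := by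
      by_contra h; exact hj0 (hzero j0 h)
    rw [Qf_expand hB]
    have hterms : ∀ j ∈ Finset.univ, hB.eigenvalues j * (u.repr x j)^2 ≤ 0 := by
      intro j _
      by_cases hj : hB.eigenvalues j < 0
      · exact mul_nonpos_of_nonpos_of_nonneg hj.le (sq_nonneg _)
      · rw [hzero j hj]; simp
    have hlt : hB.eigenvalues j0 * (u.repr x j0)^2 < 0 := by
      apply mul_neg_of_neg_of_pos hj0neg
      positivity
    calc ∑ i, hB.eigenvalues i * (u.repr x i)^2
        ≤ hB.eigenvalues j0 * (u.repr x j0)^2 := by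
          rw [Finset.sum_eq_sum_sdiff_singleton_add (Finset.mem_univ j0)]
          have : ∑ i ∈ Finset.univ \ {j0}, hB.eigenvalues i * (u.repr x i)^2 ≤ 0 :=
            Finset.sum_nonpos fun j hj => hterms j (Finset.mem_univ j)
          linarith
      _ < 0 := hlt
  · have hli : LinearIndependent ℝ (fun i : P => u i.1) :=
      (u.orthonormal.linearIndependent).comp Subtype.val Subtype.val_injective
    rw [finrank_span_eq_card hli, Nat.card_eq_fintype_card]

lemma Qf_add_smul (B Nm : Matrix (Fin N) (Fin N) ℝ) (t : ℝ) (x : EuclideanSpace ℝ (Fin N)) :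
    Qf (B + t • Nm) x = Qf B x + t * Qf Nm x := by
  simp only [Qf, map_add, map_smul, LinearMap.add_apply, LinearMap.smul_apply,
    inner_add_right, real_inner_smul_right]

lemma Qf_smul (B : Matrix (Fin N) (Fin N) ℝ) (a : ℝ) (x : EuclideanSpace ℝ (Fin N)) :
    Qf B (a • x) = a^2 * Qf B x := by
  simp only [Qf, map_smul, real_inner_smul_right, real_inner_smul_left]
  ring

lemma Qf_neg (B : Matrix (Fin N) (Fin N) ℝ) (x : EuclideanSpace ℝ (Fin N)) :
    Qf (-B) x = - Qf B x := by
  simp only [Qf, map_neg, LinearMap.neg_apply, inner_neg_right]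

lemma Qf_continuous (B : Matrix (Fin N) (Fin N) ℝ) : Continuous (Qf B) := by
  have hL : Continuous (Matrix.toEuclideanLin B) :=
    LinearMap.continuous_of_finiteDimensional _
  exact Continuous.inner (𝕜 := ℝ) continuous_id hL

lemma Qf_bound (Nm : Matrix (Fin N) (Fin N) ℝ) :
    ∃ C : ℝ, 0 ≤ C ∧ ∀ x : EuclideanSpace ℝ (Fin N), |Qf Nm x| ≤ C * ‖x‖^2 := by
  let L := LinearMap.toContinuousLinearMap (Matrix.toEuclideanLin Nm)
  refine ⟨‖L‖, norm_nonneg _, fun x => ?_⟩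
  have h1 : |Qf Nm x| ≤ ‖x‖ * ‖L x‖ := abs_real_inner_le_norm x (L x)
  have h2 : ‖L x‖ ≤ ‖L‖ * ‖x‖ := L.le_opNorm x
  calc |Qf Nm x| ≤ ‖x‖ * ‖L x‖ := h1
    _ ≤ ‖x‖ * (‖L‖ * ‖x‖) := by
        apply mul_le_mul_of_nonneg_left h2 (norm_nonneg _)
    _ = ‖L‖ * ‖x‖^2 := by ring

lemma posOn_stable {B Nm : Matrix (Fin N) (Fin N) ℝ}
    {W : Submodule ℝ (EuclideanSpace ℝ (Fin N))} (hW : PosOn B W) :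
    ∃ ε > (0:ℝ), ∀ t : ℝ, |t| < ε → PosOn (B + t • Nm) W := by
  by_cases hWtriv : ∀ x ∈ W, x = 0
  · exact ⟨1, one_pos, fun t _ x hx hne => absurd (hWtriv x hx) hne⟩
  push_neg at hWtriv
  obtain ⟨x0, hx0W, hx0⟩ := hWtriv
  obtain ⟨C, hC0, hC⟩ := Qf_bound Nm
  -- the unit sphere within W
  set S : Set (EuclideanSpace ℝ (Fin N)) := Metric.sphere 0 1 ∩ W with hS
  have hScomp : IsCompact S :=
    (isCompact_sphere 0 1).inter_right W.closed_of_finiteDimensional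
  have hSne : S.Nonempty := by
    refine ⟨‖x0‖⁻¹ • x0, ?_, W.smul_mem _ hx0W⟩
    simp [norm_smul, norm_ne_zero_iff.2 hx0, inv_mul_cancel₀]
  obtain ⟨z, hzS, hzmin⟩ := hScomp.exists_isMinOn hSne (Qf_continuous B).continuousOn
  have hznorm : ‖z‖ = 1 := by simpa using hzS.1
  have hzW : z ∈ W := hzS.2
  have hz0 : z ≠ 0 := by intro h; rw [h] at hznorm; simp at hznorm
  set c := Qf B z with hc
  have hcpos : 0 < c := hW z hzW hz0
  refine ⟨c / (C + 1), div_pos hcpos (by linarith), fun t ht x hxW hxne => ?_⟩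
  set r := ‖x‖ with hr
  have hrpos : 0 < r := norm_pos_iff.2 hxne
  have hzx : Qf B x ≥ c * r^2 := by
    have hmem : r⁻¹ • x ∈ S := by
      constructor
      · simp [norm_smul, hr, abs_of_pos hrpos, inv_mul_cancel₀ hrpos.ne', inv_mul_cancel₀ (norm_ne_zero_iff.2 hxne)]
      · exact W.smul_mem _ hxW
    have this := hzmin hmem
    simp only [Set.mem_setOf_eq] at this
    have hq : Qf B (r⁻¹ • x) = r⁻¹^2 * Qf B x := Qf_smul B _ x
    rw [hq] at this
    have h2 : c * r^2 ≤ (r⁻¹^2 * Qf B x) * r^2 := by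
      apply mul_le_mul_of_nonneg_right this (by positivity)
    calc c * r^2 ≤ (r⁻¹^2 * Qf B x) * r^2 := h2
      _ = Qf B x := by field_simp
  have hNbd : |t * Qf Nm x| < c * r^2 := by
    have h1 : |Qf Nm x| ≤ C * r^2 := hC x
    have h2 : |t| * (C + 1) < c := (lt_div_iff₀ (by linarith)).1 ht
    have h3 : |t| * C < c := by nlinarith [abs_nonneg t]
    rw [abs_mul]
    calc |t| * |Qf Nm x| ≤ |t| * (C * r^2) :=
          mul_le_mul_of_nonneg_left h1 (abs_nonneg t)
      _ = (|t| * C) * r^2 := by ring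
      _ < c * r^2 := by
          exact mul_lt_mul_of_pos_right h3 (by positivity)
  rw [Qf_add_smul]
  have := neg_abs_le (t * Qf Nm x)
  linarith

lemma negOn_stable {B Nm : Matrix (Fin N) (Fin N) ℝ}
    {W : Submodule ℝ (EuclideanSpace ℝ (Fin N))} (hW : NegOn B W) :
    ∃ ε > (0:ℝ), ∀ t : ℝ, |t| < ε → NegOn (B + t • Nm) W := by
  have hpos : PosOn (-B) W := fun x hx hne => by
    have := hW x hx hne; rw [Qf_neg]; linarith
  obtain ⟨ε, hε, hstab⟩ := posOn_stable (Nm := -Nm) hpos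
  refine ⟨ε, hε, fun t ht x hx hne => ?_⟩
  have := hstab t ht x hx hne
  have heq : -B + t • -Nm = -(B + t • Nm) := by
    rw [smul_neg]; abel
  rw [heq, Qf_neg] at this
  linarith

noncomputable def pcount (B : Matrix (Fin N) (Fin N) ℝ) : ℕ :=
  if h : B.IsHermitian then Nat.card {i // 0 < h.eigenvalues i} else 0

noncomputable def ncount (B : Matrix (Fin N) (Fin N) ℝ) : ℕ :=
  if h : B.IsHermitian then Nat.card {i // h.eigenvalues i < 0} else 0

lemma pcount_eq {B : Matrix (Fin N) (Fin N) ℝ} (h : B.IsHermitian) :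
    pcount B = Nat.card {i // 0 < h.eigenvalues i} := dif_pos h

lemma ncount_eq {B : Matrix (Fin N) (Fin N) ℝ} (h : B.IsHermitian) :
    ncount B = Nat.card {i // h.eigenvalues i < 0} := dif_pos h

lemma pcount_add_ncount {B : Matrix (Fin N) (Fin N) ℝ} (h : B.IsHermitian)
    (hdet : B.det ≠ 0) : pcount B + ncount B = N := by
  have heig : ∀ i, h.eigenvalues i ≠ 0 := by
    have hprod : B.det = ∏ i, (h.eigenvalues i : ℝ) := by
      simpa using h.det_eq_prod_eigenvalues
    rw [hprod] at hdet
    intro i hi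
    exact hdet (Finset.prod_eq_zero (Finset.mem_univ i) (by exact_mod_cast hi))
  rw [pcount_eq h, ncount_eq h, Nat.card_eq_fintype_card, Nat.card_eq_fintype_card,
    Fintype.card_subtype, Fintype.card_subtype]
  have hco : Finset.univ.filter (fun i => h.eigenvalues i < 0)
      = Finset.univ.filter (fun i => ¬ 0 < h.eigenvalues i) := by
    apply Finset.filter_congr
    intro i _
    constructor
    · exact fun hl => not_lt.2 hl.le
    · intro hg
      rcases (heig i).lt_or_gt with hl | hl
      · exact hl
      · exact absurd hl hg
  rw [hco, Finset.card_filter_add_card_filter_not, Finset.card_univ, Fintype.card_fin]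

lemma counts_const {B Nm : Matrix (Fin N) (Fin N) ℝ} (hB : B.IsHermitian) (hN : Nm.IsHermitian)
    (hdet : ∀ t : ℝ, (B + t • Nm).det ≠ 0) (t₀ t₁ : ℝ) :
    pcount (B + t₀ • Nm) = pcount (B + t₁ • Nm) ∧
    ncount (B + t₀ • Nm) = ncount (B + t₁ • Nm) := by
  have hherm : ∀ t : ℝ, (B + t • Nm).IsHermitian := by
    intro t
    unfold Matrix.IsHermitian at *
    rw [Matrix.conjTranspose_add, Matrix.conjTranspose_smul, hB, hN, star_trivial]
  have hsum : ∀ t : ℝ, pcount (B + t • Nm) + ncount (B + t • Nm) = N :=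
    fun t => pcount_add_ncount (hherm t) (hdet t)
  have key : ∀ t0 : ℝ, ∃ ε > (0:ℝ), ∀ t : ℝ, |t - t0| < ε →
      pcount (B + t • Nm) = pcount (B + t0 • Nm) ∧
      ncount (B + t • Nm) = ncount (B + t0 • Nm) := by
    intro t0
    obtain ⟨Wp, hWp, hWpdim⟩ := exists_posOn_finrank_eq (hherm t0)
    obtain ⟨Wn, hWn, hWndim⟩ := exists_negOn_finrank_eq (hherm t0)
    obtain ⟨ε1, hε1, hstab1⟩ := posOn_stable (Nm := Nm) hWp
    obtain ⟨ε2, hε2, hstab2⟩ := negOn_stable (Nm := Nm) hWn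
    refine ⟨min ε1 ε2, lt_min hε1 hε2, fun t ht => ?_⟩
    have heqmat : (B + t0 • Nm) + (t - t0) • Nm = B + t • Nm := by
      rw [sub_smul]; abel
    have hp1 : PosOn (B + t • Nm) Wp := by
      rw [← heqmat]
      exact hstab1 _ (lt_of_lt_of_le ht (min_le_left _ _))
    have hn1 : NegOn (B + t • Nm) Wn := by
      rw [← heqmat]
      exact hstab2 _ (lt_of_lt_of_le ht (min_le_right _ _))
    have hple : pcount (B + t0 • Nm) ≤ pcount (B + t • Nm) := by
      rw [pcount_eq (hherm t0), ← hWpdim, pcount_eq (hherm t)]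
      exact posOn_finrank_le (hherm t) hp1
    have hnle : ncount (B + t0 • Nm) ≤ ncount (B + t • Nm) := by
      rw [ncount_eq (hherm t0), ← hWndim, ncount_eq (hherm t)]
      exact negOn_finrank_le (hherm t) hn1
    have h1 := hsum t
    have h2 := hsum t0
    omega
  set g : ℝ → ℕ × ℕ := fun t => (pcount (B + t • Nm), ncount (B + t • Nm)) with hg
  have hlc : IsLocallyConstant g := by
    intro s
    rw [Metric.isOpen_iff]
    intro t hts
    obtain ⟨ε, hε, hloc⟩ := key t
    refine ⟨ε, hε, fun t' ht' => ?_⟩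
    rw [Metric.mem_ball, Real.dist_eq] at ht'
    have := hloc t' ht'
    have hgg : g t' = g t := by
      rw [hg]
      simp only [Prod.mk.injEq]
      exact ⟨this.1, this.2⟩
    simpa [Set.mem_preimage, hgg] using hts
  have := hlc.apply_eq_of_preconnectedSpace t₀ t₁
  rw [hg] at this
  exact ⟨congrArg Prod.fst this, congrArg Prod.snd this⟩

end Spectral

section MatchingSubspace
variable {N : ℕ}
lemma Qf_eq_sum (B : Matrix (Fin N) (Fin N) ℝ) (x : EuclideanSpace ℝ (Fin N)) :
    Qf B x = ∑ i, ∑ j, x i * B i j * x j := by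
  simp [Qf, Matrix.toEuclideanLin_apply, PiLp.inner_apply, Matrix.mulVec, dotProduct,
    Finset.mul_sum, mul_assoc]
  exact Finset.sum_congr rfl fun i _ => by
    rw [Finset.sum_mul]; exact Finset.sum_congr rfl fun j _ => by ring

lemma matching_subspace {m : ℕ} (p : Fin (2*m) → Fin (2*m))
    (hpp : ∀ v, p (p v) = v) (hpne : ∀ v, p v ≠ v)
    (s : Fin (2*m) → ℝ) (hs : ∀ v, s v * s v = 1) (hssymm : ∀ v, s (p v) = s v)
    (B : Matrix (Fin (2*m)) (Fin (2*m)) ℝ)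
    (hBdef : ∀ i j, B i j = if j = p i then s i else 0)
    (η : ℝ) (hη : η * η = 1) :
    ∃ W : Submodule ℝ (EuclideanSpace ℝ (Fin (2*m))),
      Module.finrank ℝ W = m ∧ ∀ x ∈ W, x ≠ 0 → 0 < η * Qf B x := by
  have hpinj : Function.Injective p := fun a b h => by
    have := congrArg p h; rwa [hpp, hpp] at this
  -- quadratic form formula
  have hQ : ∀ x : EuclideanSpace ℝ (Fin (2*m)), Qf B x = ∑ v, x v * s v * x (p v) := by
    intro x
    rw [Qf_eq_sum]
    have hone : ∀ i : Fin (2*m), ∑ j, x i * B i j * x j = x i * B i (p i) * x (p i) := by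
      intro i
      apply Finset.sum_eq_single (p i)
      · intro j _ hj
        rw [hBdef, if_neg hj, mul_zero, zero_mul]
      · intro h
        exact absurd (Finset.mem_univ _) h
    simp_rw [hone]
    congr 1
    ext i
    rw [hBdef, if_pos rfl]
  -- the transversal
  set R : Finset (Fin (2*m)) := Finset.univ.filter (fun v => v < p v) with hR
  have hcardR : R.card = m := by
    have hbij : R.card = (Finset.univ.filter (fun v => ¬ v < p v)).card := by
      apply Finset.card_bij (fun a _ => p a)
      · intro a ha
        rw [Finset.mem_filter] at ha ⊢
        refine ⟨Finset.mem_univ _, ?_⟩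
        rw [hpp]
        exact not_lt.2 ha.2.le
      · intro a _ b _ h
        exact hpinj h
      · intro b hb
        rw [Finset.mem_filter] at hb
        have hlt : p b < b := by
          rcases lt_trichotomy b (p b) with h | h | h
          · exact absurd h hb.2
          · exact absurd h.symm (hpne b)
          · exact h
        refine ⟨p b, ?_, hpp b⟩
        rw [Finset.mem_filter]
        exact ⟨Finset.mem_univ _, by rw [hpp]; exact hlt⟩
    have htot : R.card + (Finset.univ.filter (fun v => ¬ v < p v)).card = 2*m := by
      rw [Finset.card_filter_add_card_filter_not, Finset.card_univ, Fintype.card_fin]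
    omega
  have hcardι : Fintype.card {v : Fin (2*m) // v < p v} = m := by
    rw [Fintype.card_subtype]
    exact hcardR
  -- the family of vectors
  set vfam : {v : Fin (2*m) // v < p v} → EuclideanSpace ℝ (Fin (2*m)) :=
    fun r => EuclideanSpace.single r.1 1 + (η * s r.1) • EuclideanSpace.single (p r.1) 1
    with hvfam
  have hvent : ∀ r v, vfam r v =
      (if v = r.1 then 1 else 0) + (η * s r.1) * (if v = p r.1 then 1 else 0) := by
    intro r v
    simp [hvfam, EuclideanSpace.single_apply]
  -- disjointness facts
  have hperp : ∀ r r' : {v : Fin (2*m) // v < p v}, r' ≠ r → p r'.1 ≠ r.1 := by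
    intro r r' _ h
    have h2 : r'.1 < p r'.1 := r'.2
    rw [h] at h2
    have h3 : p r.1 = r'.1 := by rw [← h, hpp]
    have h1 : r.1 < p r.1 := r.2
    rw [h3] at h1
    exact absurd h1 (not_lt.2 h2.le)
  have hsum_apply : ∀ (c : {v : Fin (2*m) // v < p v} → ℝ) (v : Fin (2*m)),
      (∑ r', c r' • vfam r') v = ∑ r', c r' * vfam r' v := by
    intro c v
    rw [WithLp.ofLp_sum, Finset.sum_apply]
    exact Finset.sum_congr rfl fun r' _ => rfl
  -- coordinates
  have hxr : ∀ (c : {v : Fin (2*m) // v < p v} → ℝ) (r : {v : Fin (2*m) // v < p v}),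
      (∑ r', c r' • vfam r') r.1 = c r := by
    intro c r
    rw [hsum_apply]
    rw [Finset.sum_eq_single r]
    · rw [hvent]
      have h1 : r.1 ≠ p r.1 := fun h => hpne r.1 h.symm
      simp [h1]
    · intro r' _ hr'
      rw [hvent]
      have h1 : r.1 ≠ r'.1 := fun h => hr' (Subtype.ext h.symm)
      have h2 : r.1 ≠ p r'.1 := fun h => hperp r r' hr' h.symm
      simp [h1, h2]
    · intro h
      exact absurd (Finset.mem_univ _) h
  have hxp : ∀ (c : {v : Fin (2*m) // v < p v} → ℝ) (r : {v : Fin (2*m) // v < p v}),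
      (∑ r', c r' • vfam r') (p r.1) = η * s r.1 * c r := by
    intro c r
    rw [hsum_apply]
    rw [Finset.sum_eq_single r]
    · rw [hvent]
      have h1 : p r.1 ≠ r.1 := hpne r.1
      simp [h1]
      ring
    · intro r' _ hr'
      rw [hvent]
      have h1 : p r.1 ≠ r'.1 := hperp r' r (fun he => hr' he.symm)
      have h2 : p r.1 ≠ p r'.1 := fun h => hr' (Subtype.ext (hpinj h)).symm
      simp [h1, h2]
    · intro h
      exact absurd (Finset.mem_univ _) h
  -- the span and the relation its elements satisfy
  set W : Submodule ℝ (EuclideanSpace ℝ (Fin (2*m))) := Submodule.span ℝ (Set.range vfam) with hW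
  have hrel : ∀ x ∈ W, ∀ r : {v : Fin (2*m) // v < p v}, x (p r.1) = η * s r.1 * x r.1 := by
    intro x hx r
    rw [hW, Submodule.mem_span_range_iff_exists_fun] at hx
    obtain ⟨c, hc⟩ := hx
    rw [← hc, hxp c r, hxr c r]
  have hQW : ∀ x ∈ W, Qf B x = 2 * η * ∑ v ∈ R, (x v)^2 := by
    intro x hxW
    rw [hQ]
    rw [← Finset.sum_filter_add_sum_filter_not Finset.univ (fun v => v < p v)
      (fun v => x v * s v * x (p v))]
    have hRc : ∑ v ∈ Finset.univ.filter (fun v => ¬ v < p v), x v * s v * x (p v)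
        = ∑ v ∈ R, x (p v) * s (p v) * x v := by
      apply Finset.sum_nbij' (i := fun v => p v) (j := fun v => p v)
      · intro a ha
        rw [Finset.mem_filter] at ha ⊢
        refine ⟨Finset.mem_univ _, ?_⟩
        rw [hpp]
        rcases lt_trichotomy a (p a) with h | h | h
        · exact absurd h ha.2
        · exact absurd h.symm (hpne a)
        · exact h
      · intro a ha
        rw [Finset.mem_filter] at ha ⊢
        refine ⟨Finset.mem_univ _, ?_⟩
        rw [hpp]
        exact not_lt.2 ha.2.le
      · intro a _; exact hpp a
      · intro a _; exact hpp a
      · intro a _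
        rw [hpp]
    rw [hRc, ← Finset.sum_add_distrib]
    rw [Finset.mul_sum]
    apply Finset.sum_congr rfl
    intro v hv
    rw [Finset.mem_filter] at hv
    rw [hrel x hxW ⟨v, hv.2⟩, hssymm]
    linear_combination (2 * η * (x v)^2) * hs v
  have hzero : ∀ x ∈ W, (∀ v ∈ R, x v = 0) → x = 0 := by
    intro x hxW hall
    have hallv : ∀ v, x v = 0 := by
      intro v
      rcases lt_trichotomy v (p v) with h | h | h
      · exact hall v (by rw [hR, Finset.mem_filter]; exact ⟨Finset.mem_univ _, h⟩)
      · exact absurd h.symm (hpne v)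
      · have hv' : p v < p (p v) := by rw [hpp]; exact h
        have h1 := hrel x hxW ⟨p v, hv'⟩
        rw [hpp] at h1
        have h2 : x (p v) = 0 :=
          hall (p v) (by rw [hR, Finset.mem_filter]; exact ⟨Finset.mem_univ _, hv'⟩)
        rw [h1, h2, mul_zero]
    ext v
    exact hallv v
  refine ⟨W, ?_, ?_⟩
  · have hli : LinearIndependent ℝ vfam := by
      rw [Fintype.linearIndependent_iff]
      intro g hg r
      have h1 := hxr g r
      rw [hg] at h1
      simpa using h1.symm
    rw [hW, finrank_span_eq_card hli, hcardι]
  · intro x hxW hxne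
    rw [hQW x hxW]
    have hpos : 0 < ∑ v ∈ R, (x v)^2 := by
      have hex : ∃ v ∈ R, x v ≠ 0 := by
        by_contra hcon
        push_neg at hcon
        exact hxne (hzero x hxW hcon)
      obtain ⟨v0, hv0R, hv0⟩ := hex
      apply Finset.sum_pos'
      · intro v _; positivity
      · exact ⟨v0, hv0R, by positivity⟩
    calc (0:ℝ) < 2 * (η * η) * ∑ v ∈ R, (x v)^2 := by rw [hη]; linarith
      _ = η * (2 * η * ∑ v ∈ R, (x v)^2) := by ring

end MatchingSubspace
/-- spanning subgraph associated to a fixed-point-free permutation -/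
def permGraph {V : Type*} (π : Equiv.Perm V) : SimpleGraph V where
  Adj u v := u ≠ v ∧ (π u = v ∨ π v = u)
  symm := ⟨by intro u v ⟨h1, h2⟩; exact ⟨h1.symm, h2.symm⟩⟩
  loopless := ⟨by intro v ⟨h1, _⟩; exact h1 rfl⟩

lemma ndeg_eq_ncard {V : Type*} (H : SimpleGraph V) (v : V) :
    ndeg H v = Set.ncard {w | H.Adj v w} := rfl

section PermGraph
variable {V : Type*} (π : Equiv.Perm V)

lemma permGraph_nbhd (hfix : ∀ v, π v ≠ v) (v : V) :
    {w | (permGraph π).Adj v w} = {π v, π.symm v} := by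
  ext w
  simp only [Set.mem_setOf_eq, permGraph, Set.mem_insert_iff, Set.mem_singleton_iff]
  constructor
  · rintro ⟨hne, h | h⟩
    · exact Or.inl h.symm
    · exact Or.inr (by rw [← h]; simp)
  · rintro (rfl | rfl)
    · exact ⟨fun h => hfix v h.symm, Or.inl rfl⟩
    · refine ⟨?_, Or.inr (by simp)⟩
      intro h
      apply hfix v
      conv_lhs => rw [h]
      rw [Equiv.apply_symm_apply]

lemma permGraph_ndeg (hfix : ∀ v, π v ≠ v) (v : V) :
    ndeg (permGraph π) v = if π (π v) = v then 1 else 2 := by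
  rw [ndeg_eq_ncard, permGraph_nbhd π hfix]
  by_cases h : π (π v) = v
  · have : π.symm v = π v := by
      apply π.injective; rw [Equiv.apply_symm_apply, h]
    rw [this]
    simp [h]
  · have hne : π v ≠ π.symm v := by
      intro he
      apply h
      conv_lhs => rw [he, Equiv.apply_symm_apply]
    simp [h, Set.ncard_pair hne]

lemma permGraph_ndeg_one_iff (hfix : ∀ v, π v ≠ v) (v : V) :
    ndeg (permGraph π) v = 1 ↔ π (π v) = v := by
  rw [permGraph_ndeg π hfix]
  by_cases h : π (π v) = v <;> simp [h]

lemma permGraph_sachs {G : SimpleGraph V} (hadj : ∀ v, G.Adj (π v) v) :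
    IsSachsSubgraph G (permGraph π) := by
  have hfix : ∀ v, π v ≠ v := fun v h => by
    have := hadj v; rw [h] at this; exact this.ne rfl
  refine ⟨?_, ?_, ?_⟩
  · intro u v huv
    obtain ⟨hne, h | h⟩ := huv
    · rw [← h]; exact (hadj u).symm
    · rw [← h]; exact hadj v
  · intro v
    rw [permGraph_ndeg π hfix]
    by_cases h : π (π v) = v <;> simp [h]
  · rintro u v huv ⟨h1, h2⟩
    rw [permGraph_ndeg_one_iff π hfix] at h1
    have h2' : ¬ π (π v) = v := by
      rw [permGraph_ndeg π hfix] at h2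
      intro h; rw [if_pos h] at h2; omega
    obtain ⟨hne, h | h⟩ := huv
    · apply h2'
      rw [← h, h1, h]
    · apply h2'
      have hv : π u = v := π.injective (by rw [h1, ← h])
      rw [h, hv]
end PermGraph

lemma matching_exists_partner {V : Type*} {M : SimpleGraph V} (h1 : ∀ v, ndeg M v = 1) :
    ∀ v, ∃ w, M.Adj v w ∧ ∀ w', M.Adj v w' → w' = w := by
  intro v
  have := h1 v
  rw [ndeg, Nat.card_eq_one_iff_exists] at this
  obtain ⟨x, hx⟩ := this
  exact ⟨x.1, x.2, fun w' h => congrArg Subtype.val (hx ⟨w', h⟩)⟩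

lemma matching_sachs {V : Type*} {G M : SimpleGraph V} (hM : IsPerfectMatchingSub G M) :
    IsSachsSubgraph G M :=
  ⟨hM.1, fun v => Or.inl (hM.2 v), fun u v _ h => by rw [hM.2 v] at h; omega⟩

lemma det_interp {m : ℕ} (G : SimpleGraph (Fin (2*m)))
    (huniq : ∃! S : SimpleGraph (Fin (2*m)), IsSachsSubgraph G S)
    (M : SimpleGraph (Fin (2*m))) (hM : IsPerfectMatchingSub G M)
    (σ : Fin (2*m) → Fin (2*m) → ℝ)
    (hσsymm : ∀ i j, σ i j = σ j i)
    (hσval : ∀ i j, G.Adj i j → σ i j = 1 ∨ σ i j = -1)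
    (p : Fin (2*m) → Fin (2*m)) (hp : ∀ v, M.Adj v (p v))
    (hpu : ∀ v w, M.Adj v w → w = p v) (t : ℝ) :
    (Matrix.of fun i j =>
      if M.Adj i j then σ i j else if G.Adj i j then t * σ i j else 0).det = (-1)^m := by
  set Ent : Matrix (Fin (2*m)) (Fin (2*m)) ℝ := Matrix.of fun i j =>
      if M.Adj i j then σ i j else if G.Adj i j then t * σ i j else 0 with hEnt
  have hpp : ∀ v, p (p v) = v := fun v => ((hpu (p v) v (hp v).symm)).symm
  have hpne : ∀ v, p v ≠ v := fun v => (hp v).ne'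
  have hMadj_iff : ∀ i j, M.Adj i j ↔ j = p i := by
    intro i j
    exact ⟨fun h => hpu i j h, fun h => h ▸ hp i⟩
  set τ : Equiv.Perm (Fin (2*m)) := Function.Involutive.toPerm p hpp with hτ
  have hτcoe : ∀ v, τ v = p v := fun _ => rfl
  have hent_ne : ∀ i j, ¬ G.Adj i j → Ent i j = 0 := by
    intro i j h
    have hm : ¬ M.Adj i j := fun hm => h (hM.1 hm)
    simp [hEnt, hm, h]
  have huniqperm : ∀ π : Equiv.Perm (Fin (2*m)), (∀ i, Ent (π i) i ≠ 0) → π = τ := by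
    intro π hne
    have hadj : ∀ i, G.Adj (π i) i := by
      intro i
      by_contra h
      exact hne i (hent_ne _ _ h)
    have hSachs := permGraph_sachs π hadj
    obtain ⟨S, hS, hSuniq⟩ := huniq
    have e1 : permGraph π = S := hSuniq _ hSachs
    have e2 : M = S := hSuniq _ (matching_sachs hM)
    have e3 : permGraph π = M := e1.trans e2.symm
    apply Equiv.ext
    intro v
    rw [hτcoe]
    have hAdjM : M.Adj v (π v) := by
      rw [← e3]
      exact ⟨((hadj v).ne).symm, Or.inl rfl⟩
    exact hpu v (π v) hAdjM
  have hτne_term : ∀ i, Ent (τ i) i = σ (p i) i := by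
    intro i
    have h' : M.Adj (p i) i := (hp i).symm
    have : τ i = p i := hτcoe i
    rw [this]
    simp [hEnt, h']
  have hprod : ∏ i, Ent (τ i) i = 1 := by
    simp_rw [hτne_term]
    apply Finset.prod_involution (g := fun a _ => p a)
    · intro a _
      rw [hpp]
      have hG : G.Adj a (p a) := hM.1 (hp a)
      rw [hσsymm a (p a)]
      rcases hσval a (p a) hG with h | h <;> rw [hσsymm (p a) a, h] <;> norm_num
    · exact fun a _ _ => hpne a
    · exact fun a _ => Finset.mem_univ _
    · exact fun a _ => hpp a
  have hsign : Equiv.Perm.sign τ = (-1)^m := by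
    by_cases hm : m = 0
    · subst hm
      have : τ = 1 := by
        ext i
        exact absurd i.2 (by omega)
      rw [this]
      simp
    · have hτne : τ ≠ 1 := by
        intro h
        have := hpne ⟨0, by omega⟩
        rw [← hτcoe, h] at this
        exact this rfl
      have hτ2 : τ^2 = 1 := by
        ext v
        simp only [sq, Equiv.Perm.mul_apply, Equiv.Perm.one_apply, hτcoe, hpp]
      have horder : orderOf τ = 2 := orderOf_eq_prime hτ2 hτne
      have hsupport : τ.support = Finset.univ :=
        Finset.eq_univ_iff_forall.2 fun v => Equiv.Perm.mem_support.2 (by rw [hτcoe]; exact hpne v)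
      have hsum : τ.cycleType.sum = 2*m := by
        rw [Equiv.Perm.sum_cycleType, hsupport, Finset.card_univ, Fintype.card_fin]
      have hmem2 : ∀ k ∈ τ.cycleType, k = 2 := by
        intro k hk
        have hdvd : k ∣ 2 := by
          rw [← horder, ← Equiv.Perm.lcm_cycleType]
          exact Multiset.dvd_lcm hk
        have h2 := Equiv.Perm.two_le_of_mem_cycleType hk
        have h3 : k ≤ 2 := Nat.le_of_dvd (by norm_num) hdvd
        omega
      have hcard : Multiset.card τ.cycleType = m := by
        have hrep : τ.cycleType = Multiset.replicate (Multiset.card τ.cycleType) 2 :=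
          Multiset.eq_replicate_card.2 hmem2
        have := hsum
        rw [hrep, Multiset.sum_replicate, smul_eq_mul] at this
        omega
      rw [Equiv.Perm.sign_of_cycleType, hsum, hcard, pow_add, pow_mul]
      norm_num
  rw [Matrix.det_apply]
  rw [Finset.sum_eq_single_of_mem τ (Finset.mem_univ τ)]
  · rw [hprod, hsign]
    simp [Units.smul_def]
  · intro π _ hπτ
    have : ∏ i, Ent (π i) i = 0 := by
      by_contra hprodne
      exact hπτ (huniqperm π fun i h0 =>
        hprodne (Finset.prod_eq_zero (Finset.mem_univ i) h0))
    rw [this, smul_zero]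


/-- Let `(G,σ)` be a signed simple graph with a unique Sachs subgraph.
If `G` has a perfect matching, then the spectrum of `(G,σ)` splits about the origin:
exactly half of the eigenvalues of its adjacency matrix are positive and half are
negative. -/
theorem unique_sachs_perfect_matching_spectrum_splits
    {m : ℕ} (G : SimpleGraph (Fin (2 * m)))
    (huniq : ∃! S : SimpleGraph (Fin (2 * m)), IsSachsSubgraph G S)
    (M : SimpleGraph (Fin (2 * m))) (hM : IsPerfectMatchingSub G M)
    (σ : Fin (2 * m) → Fin (2 * m) → ℝ)
    (hσsymm : ∀ i j, σ i j = σ j i)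
    (hσval : ∀ i j, G.Adj i j → σ i j = 1 ∨ σ i j = -1)
    (A : Matrix (Fin (2 * m)) (Fin (2 * m)) ℝ)
    (hAdef : A = Matrix.of fun i j => if G.Adj i j then σ i j else 0)
    (hA : A.IsHermitian) :
    Nat.card {i // 0 < hA.eigenvalues i} = m ∧
    Nat.card {i // hA.eigenvalues i < 0} = m := by
  choose p hp hpu using matching_exists_partner hM.2
  have hpp : ∀ v, p (p v) = v := fun v => (hpu (p v) v (hp v).symm).symm
  have hpne : ∀ v, p v ≠ v := fun v => (hp v).ne'
  set B : Matrix (Fin (2*m)) (Fin (2*m)) ℝ :=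
    Matrix.of (fun i j => if M.Adj i j then σ i j else 0) with hB
  set Nmat : Matrix (Fin (2*m)) (Fin (2*m)) ℝ := A - B with hNm
  have hBherm : B.IsHermitian := by
    show B.conjTranspose = B
    ext i j
    rw [Matrix.conjTranspose_apply, star_trivial]
    by_cases h : M.Adj i j
    · have h' : M.Adj j i := h.symm
      simp [hB, h, h', hσsymm i j]
    · have h' : ¬ M.Adj j i := fun hc => h hc.symm
      simp [hB, h, h']
  have hNherm : Nmat.IsHermitian := hA.sub hBherm
  have hfam : ∀ t : ℝ, B + t • Nmat = Matrix.of (fun i j =>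
      if M.Adj i j then σ i j else if G.Adj i j then t * σ i j else 0) := by
    intro t
    ext i j
    rw [Matrix.add_apply, Matrix.smul_apply, hNm, Matrix.sub_apply, hAdef]
    by_cases hMadj : M.Adj i j
    · have hG : G.Adj i j := hM.1 hMadj
      simp [hB, hMadj, hG]
    · by_cases hG : G.Adj i j <;> simp [hB, hMadj, hG]
  have hdet : ∀ t : ℝ, (B + t • Nmat).det = (-1 : ℝ)^m := by
    intro t
    rw [hfam t]
    exact det_interp G huniq M hM σ hσsymm hσval p hp hpu t
  have hdetne : ∀ t : ℝ, (B + t • Nmat).det ≠ 0 := by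
    intro t
    rw [hdet t]
    exact pow_ne_zero _ (by norm_num)
  have hBA : B + (1:ℝ) • Nmat = A := by
    rw [one_smul, hNm, add_sub_cancel]
  have hB0 : B + (0:ℝ) • Nmat = B := by
    rw [zero_smul, add_zero]
  -- counts for the pure matching matrix B
  have hsval : ∀ v, σ v (p v) * σ v (p v) = 1 := by
    intro v
    rcases hσval v (p v) (hM.1 (hp v)) with h | h <;> rw [h] <;> norm_num
  have hssymm : ∀ v, σ (p v) (p (p v)) = σ v (p v) := by
    intro v
    rw [hpp]
    exact hσsymm (p v) v
  have hBdef : ∀ i j, B i j = if j = p i then σ i (p i) else 0 := by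
    intro i j
    by_cases h : j = p i
    · subst h
      simp [hB, hp i]
    · have h' : ¬ M.Adj i j := fun hc => h (hpu i j hc)
      simp [hB, h, h']
  obtain ⟨Wp, hWpdim, hWppos⟩ := matching_subspace p hpp hpne (fun v => σ v (p v))
    hsval hssymm B hBdef 1 (by norm_num)
  obtain ⟨Wn, hWndim, hWnneg⟩ := matching_subspace p hpp hpne (fun v => σ v (p v))
    hsval hssymm B hBdef (-1) (by norm_num)
  have hple : m ≤ pcount B := by
    rw [pcount_eq hBherm]
    refine le_trans (le_of_eq hWpdim.symm) (posOn_finrank_le hBherm ?_)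
    intro x hx hne
    have := hWppos x hx hne
    linarith
  have hnle : m ≤ ncount B := by
    rw [ncount_eq hBherm]
    refine le_trans (le_of_eq hWndim.symm) (negOn_finrank_le hBherm ?_)
    intro x hx hne
    have := hWnneg x hx hne
    linarith
  have hsumB : pcount B + ncount B = 2*m := by
    have := hdetne 0
    rw [hB0] at this
    exact pcount_add_ncount hBherm this
  have hsumA : pcount A + ncount A = 2*m := by
    have := hdetne 1
    rw [hBA] at this
    exact pcount_add_ncount hA this
  have hcc := counts_const hBherm hNherm hdetne 1 0
  rw [hBA, hB0] at hcc
  have h1 : Nat.card {i // 0 < hA.eigenvalues i} = pcount A := (pcount_eq hA).symm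
  have h2 : Nat.card {i // hA.eigenvalues i < 0} = ncount A := (ncount_eq hA).symm
  constructor
  · rw [h1]
    omega
  · rw [h2]
    omega
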